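/- (Tail criterion for norm convergence via Cotlar–Stein.) Let H be a Hilbert space and {T_j}_{j∈ℕ} a countable family of bounded linear operators on H with A := sup_j Σ_k ‖T_j* T_k‖^{1/2} < ∞ and B := sup_k Σ_j ‖T_j T_k*‖^{1/2} < ∞. If in addition the tails A_N := sup_j Σ_{k ≥ N} ‖T_j* T_k‖^{1/2} → 0 and B_N := sup_k Σ_{j ≥ N} ‖T_j T_k*‖^{1/2} → 0 as N → ∞, then the series Σ_j T_j converges in the operator norm of B(H), and its sum T satisfies ‖T‖ ≤ √(A·B). -/

import Mathlib

namespace CotlarSteinAux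

variable {H : Type*} [NormedAddCommGroup H] [InnerProductSpace ℂ H] [CompleteSpace H]
variable (T : ℕ → H →L[ℂ] H)

/-- The product `(T j₁)* T k₁ (T j₂)* T k₂ ⋯` associated to a list of index pairs. -/
noncomputable def Dop : List (ℕ × ℕ) → (H →L[ℂ] H)
  | [] => 1
  | p :: w => (star (T p.1) * T p.2) * Dop w

/-- The interleaved geometric-mean weight of a chain starting at `T k`. -/
noncomputable def rho : ℕ → List (ℕ × ℕ) → ℝ
  | k, [] => Real.sqrt ‖T k‖
  | k, p :: w =>
      Real.sqrt ‖T k * star (T p.1)‖ * (Real.sqrt ‖star (T p.1) * T p.2‖ * rho p.2 w)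

lemma rho_nonneg : ∀ (k : ℕ) (w : List (ℕ × ℕ)), 0 ≤ rho T k w
  | k, [] => Real.sqrt_nonneg _
  | k, p :: w => by
      have h := rho_nonneg p.2 w
      have h1 := Real.sqrt_nonneg ‖T k * star (T p.1)‖
      have h2 := Real.sqrt_nonneg ‖star (T p.1) * T p.2‖
      simp only [rho]
      positivity

noncomputable def dbound : List (ℕ × ℕ) → ℝ
  | [] => 1
  | p :: w => ‖star (T p.1) * T p.2‖ * dbound w

noncomputable def cross : ℕ → List (ℕ × ℕ) → ℝ
  | _, [] => 1
  | k, p :: w => ‖T k * star (T p.1)‖ * cross p.2 w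

def lastk : ℕ → List (ℕ × ℕ) → ℕ
  | k, [] => k
  | _, p :: w => lastk p.2 w

lemma dbound_nonneg : ∀ w : List (ℕ × ℕ), 0 ≤ dbound T w
  | [] => zero_le_one
  | p :: w => mul_nonneg (norm_nonneg _) (dbound_nonneg w)

lemma cross_nonneg : ∀ (k : ℕ) (w : List (ℕ × ℕ)), 0 ≤ cross T k w
  | _, [] => zero_le_one
  | k, p :: w => mul_nonneg (norm_nonneg _) (cross_nonneg p.2 w)

lemma rho_sq : ∀ (k : ℕ) (w : List (ℕ × ℕ)),
    rho T k w * rho T k w = dbound T w * (cross T k w * ‖T (lastk k w)‖)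
  | k, [] => by
      simp only [rho, dbound, cross, lastk, one_mul]
      exact Real.mul_self_sqrt (norm_nonneg _)
  | k, p :: w => by
      have hx := Real.mul_self_sqrt (norm_nonneg (T k * star (T p.1)))
      have hy := Real.mul_self_sqrt (norm_nonneg (star (T p.1) * T p.2))
      have ih := rho_sq p.2 w
      simp only [rho, dbound, cross, lastk]
      calc (Real.sqrt ‖T k * star (T p.1)‖ *
              (Real.sqrt ‖star (T p.1) * T p.2‖ * rho T p.2 w)) *
            (Real.sqrt ‖T k * star (T p.1)‖ *
              (Real.sqrt ‖star (T p.1) * T p.2‖ * rho T p.2 w))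
          = (Real.sqrt ‖T k * star (T p.1)‖ * Real.sqrt ‖T k * star (T p.1)‖) *
              ((Real.sqrt ‖star (T p.1) * T p.2‖ * Real.sqrt ‖star (T p.1) * T p.2‖) *
                (rho T p.2 w * rho T p.2 w)) := by ring
        _ = ‖T k * star (T p.1)‖ * (‖star (T p.1) * T p.2‖ *
              (dbound T w * (cross T p.2 w * ‖T (lastk p.2 w)‖))) := by rw [hx, hy, ih]
        _ = ‖star (T p.1) * T p.2‖ * dbound T w *
              (‖T k * star (T p.1)‖ * cross T p.2 w * ‖T (lastk p.2 w)‖) := by ring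

lemma norm_Dop_le : ∀ w : List (ℕ × ℕ), ‖Dop T w‖ ≤ dbound T w
  | [] => by
      simp only [Dop, dbound]
      simpa [ContinuousLinearMap.one_def] using ContinuousLinearMap.norm_id_le
  | p :: w => by
      simp only [Dop, dbound]
      exact le_trans (norm_mul_le _ _)
        (mul_le_mul_of_nonneg_left (norm_Dop_le w) (norm_nonneg _))

lemma Dop_cons (k : ℕ) (p : ℕ × ℕ) (w : List (ℕ × ℕ)) :
    T k * Dop T (p :: w) = (T k * star (T p.1)) * (T p.2 * Dop T w) := by
  simp only [Dop, mul_assoc]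

lemma norm_cop_le_cross : ∀ (k : ℕ) (w : List (ℕ × ℕ)),
    ‖T k * Dop T w‖ ≤ cross T k w * ‖T (lastk k w)‖
  | k, [] => by simp [Dop, cross, lastk]
  | k, p :: w => by
      rw [Dop_cons]
      simp only [cross, lastk]
      conv_rhs => rw [mul_assoc]
      exact le_trans (norm_mul_le _ _)
        (mul_le_mul_of_nonneg_left (norm_cop_le_cross p.2 w) (norm_nonneg _))

/-- The key chain (term-wise geometric mean) bound. -/
lemma norm_cop_le (k : ℕ) (w : List (ℕ × ℕ)) :
    ‖T k * Dop T w‖ ≤ Real.sqrt ‖T k‖ * rho T k w := by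
  have h1 : ‖T k * Dop T w‖ ≤ ‖T k‖ * dbound T w :=
    le_trans (norm_mul_le _ _)
      (mul_le_mul_of_nonneg_left (norm_Dop_le T w) (norm_nonneg _))
  have h2 := norm_cop_le_cross T k w
  have h3 : ‖T k * Dop T w‖ * ‖T k * Dop T w‖ ≤
      (‖T k‖ * dbound T w) * (cross T k w * ‖T (lastk k w)‖) :=
    mul_le_mul h1 h2 (norm_nonneg _)
      (mul_nonneg (norm_nonneg _) (dbound_nonneg T w))
  have h4 : (‖T k‖ * dbound T w) * (cross T k w * ‖T (lastk k w)‖)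
      = ‖T k‖ * (rho T k w * rho T k w) := by rw [rho_sq]; ring
  have h6 : ‖T k * Dop T w‖ * ‖T k * Dop T w‖ ≤ ‖T k‖ * (rho T k w * rho T k w) := by
    rw [← h4]; exact h3
  have h7 := Real.sqrt_le_sqrt h6
  rwa [Real.sqrt_mul_self (norm_nonneg _), Real.sqrt_mul (norm_nonneg _),
    Real.sqrt_mul_self (rho_nonneg T _ _)] at h7

/-- The finset of chains of length `n` with entries in `F × F`. -/
def chainset (F : Finset ℕ) : ℕ → Finset (List (ℕ × ℕ))
  | 0 => {[]}
  | n + 1 => ((F ×ˢ F) ×ˢ chainset F n).image fun q => q.1 :: q.2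

lemma sum_chainset_succ {M : Type*} [AddCommMonoid M] (F : Finset ℕ) (n : ℕ)
    (f : List (ℕ × ℕ) → M) :
    ∑ w ∈ chainset F (n + 1), f w
      = ∑ j ∈ F, ∑ k' ∈ F, ∑ w ∈ chainset F n, f ((j, k') :: w) := by
  rw [chainset, Finset.sum_image, Finset.sum_product, Finset.sum_product]
  intro q _ q' _ h
  obtain ⟨h1, h2⟩ := List.cons_eq_cons.mp h
  exact Prod.ext h1 h2

lemma expand (F : Finset ℕ) : ∀ (n : ℕ) (k : ℕ),
    T k * (star (∑ j ∈ F, T j) * ∑ j ∈ F, T j) ^ n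
      = ∑ w ∈ chainset F n, T k * Dop T w
  | 0, k => by simp [chainset, Dop]
  | n + 1, k => by
      rw [sum_chainset_succ]
      have hx : star (∑ j ∈ F, T j) * (∑ j ∈ F, T j)
          = ∑ j ∈ F, ∑ k' ∈ F, star (T j) * T k' := by
        rw [star_sum, Finset.sum_mul_sum]
      rw [pow_succ', ← mul_assoc]
      nth_rewrite 1 [hx]
      rw [Finset.mul_sum, Finset.sum_mul]
      refine Finset.sum_congr rfl fun j hj => ?_
      rw [Finset.mul_sum, Finset.sum_mul]
      refine Finset.sum_congr rfl fun k' hk' => ?_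
      simp only [mul_assoc]
      rw [expand F n k']
      simp only [Finset.mul_sum, Dop, mul_assoc]

lemma sum_rho_le (F : Finset ℕ) {a b : ℝ}
    (ha : ∀ j, ∑ k ∈ F, Real.sqrt ‖star (T j) * T k‖ ≤ a)
    (hb : ∀ k, ∑ j ∈ F, Real.sqrt ‖T k * star (T j)‖ ≤ b) :
    ∀ n : ℕ, ∀ k ∈ F, ∑ w ∈ chainset F n, rho T k w ≤ Real.sqrt b * (a ^ n * b ^ n) := by
  have hb0 : 0 ≤ b :=
    le_trans (Finset.sum_nonneg fun _ _ => Real.sqrt_nonneg _) (hb 0)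
  have hTb : ∀ k ∈ F, ‖T k‖ ≤ b := by
    intro k hk
    have h1 : Real.sqrt ‖T k * star (T k)‖ ≤ ∑ j ∈ F, Real.sqrt ‖T k * star (T j)‖ :=
      Finset.single_le_sum (f := fun j => Real.sqrt ‖T k * star (T j)‖)
        (fun _ _ => Real.sqrt_nonneg _) hk
    have h2 : Real.sqrt ‖T k * star (T k)‖ = ‖T k‖ := by
      rw [CStarRing.norm_self_mul_star, Real.sqrt_mul_self (norm_nonneg _)]
    rw [h2] at h1
    exact le_trans h1 (hb k)
  intro n
  induction n with
  | zero =>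
      intro k hk
      simp only [chainset, Finset.sum_singleton, rho, pow_zero, mul_one]
      exact Real.sqrt_le_sqrt (hTb k hk)
  | succ n ih =>
      intro k hk
      rw [sum_chainset_succ]
      have hc0 : 0 ≤ Real.sqrt b * (a ^ n * b ^ n) := by
        have ha0 : 0 ≤ a :=
          le_trans (Finset.sum_nonneg fun _ _ => Real.sqrt_nonneg _) (ha 0)
        positivity
      calc ∑ j ∈ F, ∑ k' ∈ F, ∑ w ∈ chainset F n, rho T k ((j, k') :: w)
          = ∑ j ∈ F, Real.sqrt ‖T k * star (T j)‖ *
              ∑ k' ∈ F, Real.sqrt ‖star (T j) * T k'‖ * ∑ w ∈ chainset F n, rho T k' w := by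
            simp only [rho, Finset.mul_sum]
        _ ≤ ∑ j ∈ F, Real.sqrt ‖T k * star (T j)‖ *
              ∑ k' ∈ F, Real.sqrt ‖star (T j) * T k'‖ * (Real.sqrt b * (a ^ n * b ^ n)) := by
            refine Finset.sum_le_sum fun j hj => ?_
            refine mul_le_mul_of_nonneg_left ?_ (Real.sqrt_nonneg _)
            refine Finset.sum_le_sum fun k' hk' => ?_
            exact mul_le_mul_of_nonneg_left (ih k' hk') (Real.sqrt_nonneg _)
        _ = ∑ j ∈ F, Real.sqrt ‖T k * star (T j)‖ *
              ((∑ k' ∈ F, Real.sqrt ‖star (T j) * T k'‖) * (Real.sqrt b * (a ^ n * b ^ n))) := by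
            simp only [Finset.sum_mul]
        _ ≤ ∑ j ∈ F, Real.sqrt ‖T k * star (T j)‖ * (a * (Real.sqrt b * (a ^ n * b ^ n))) := by
            refine Finset.sum_le_sum fun j hj => ?_
            exact mul_le_mul_of_nonneg_left
              (mul_le_mul_of_nonneg_right (ha j) hc0) (Real.sqrt_nonneg _)
        _ = (∑ j ∈ F, Real.sqrt ‖T k * star (T j)‖) * (a * (Real.sqrt b * (a ^ n * b ^ n))) :=
            (Finset.sum_mul _ _ _).symm
        _ ≤ b * (a * (Real.sqrt b * (a ^ n * b ^ n))) := by
            have ha0 : 0 ≤ a :=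
              le_trans (Finset.sum_nonneg fun _ _ => Real.sqrt_nonneg _) (ha 0)
            exact mul_le_mul_of_nonneg_right (hb k) (by positivity)
        _ = Real.sqrt b * (a ^ (n + 1) * b ^ (n + 1)) := by ring

/-- Finite Cotlar–Stein almost-orthogonality estimate. -/
lemma norm_finset_sum_le (F : Finset ℕ) {a b : ℝ}
    (ha : ∀ j, ∑ k ∈ F, Real.sqrt ‖star (T j) * T k‖ ≤ a)
    (hb : ∀ k, ∑ j ∈ F, Real.sqrt ‖T k * star (T j)‖ ≤ b) :
    ‖∑ j ∈ F, T j‖ ≤ Real.sqrt (a * b) := by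
  have ha0 : 0 ≤ a :=
    le_trans (Finset.sum_nonneg fun _ _ => Real.sqrt_nonneg _) (ha 0)
  have hb0 : 0 ≤ b :=
    le_trans (Finset.sum_nonneg fun _ _ => Real.sqrt_nonneg _) (hb 0)
  by_cases hz : ∀ j ∈ F, T j = 0
  · rw [Finset.sum_eq_zero hz, norm_zero]
    exact Real.sqrt_nonneg _
  push_neg at hz
  obtain ⟨j₀, hj₀F, hj₀⟩ := hz
  -- a and b are positive
  have ha' : 0 < a := by
    rcases ha0.lt_or_eq with h | h
    · exact h
    exfalso
    apply hj₀
    have h1 : Real.sqrt ‖star (T j₀) * T j₀‖ ≤ ∑ k ∈ F, Real.sqrt ‖star (T j₀) * T k‖ :=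
      Finset.single_le_sum (f := fun k => Real.sqrt ‖star (T j₀) * T k‖)
        (fun _ _ => Real.sqrt_nonneg _) hj₀F
    have h2 := le_trans h1 (ha j₀)
    rw [← h] at h2
    have h3 : Real.sqrt ‖star (T j₀) * T j₀‖ = 0 :=
      le_antisymm h2 (Real.sqrt_nonneg _)
    have h4 : ‖star (T j₀) * T j₀‖ = 0 :=
      le_antisymm (Real.sqrt_eq_zero'.mp h3) (norm_nonneg _)
    rw [CStarRing.norm_star_mul_self] at h4
    have : ‖T j₀‖ = 0 := by nlinarith [norm_nonneg (T j₀)]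
    exact norm_eq_zero.mp this
  have hb' : 0 < b := by
    rcases hb0.lt_or_eq with h | h
    · exact h
    exfalso
    apply hj₀
    have h1 : Real.sqrt ‖T j₀ * star (T j₀)‖ ≤ ∑ j ∈ F, Real.sqrt ‖T j₀ * star (T j)‖ :=
      Finset.single_le_sum (f := fun j => Real.sqrt ‖T j₀ * star (T j)‖)
        (fun _ _ => Real.sqrt_nonneg _) hj₀F
    have h2 := le_trans h1 (hb j₀)
    rw [← h] at h2
    have h3 : Real.sqrt ‖T j₀ * star (T j₀)‖ = 0 :=
      le_antisymm h2 (Real.sqrt_nonneg _)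
    have h4 : ‖T j₀ * star (T j₀)‖ = 0 :=
      le_antisymm (Real.sqrt_eq_zero'.mp h3) (norm_nonneg _)
    rw [CStarRing.norm_self_mul_star] at h4
    have : ‖T j₀‖ = 0 := by nlinarith [norm_nonneg (T j₀)]
    exact norm_eq_zero.mp this
  set S := ∑ j ∈ F, T j with hS
  have hTb : ∀ k ∈ F, ‖T k‖ ≤ b := by
    intro k hk
    have h1 : Real.sqrt ‖T k * star (T k)‖ ≤ ∑ j ∈ F, Real.sqrt ‖T k * star (T j)‖ :=
      Finset.single_le_sum (f := fun j => Real.sqrt ‖T k * star (T j)‖)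
        (fun _ _ => Real.sqrt_nonneg _) hk
    have h2 : Real.sqrt ‖T k * star (T k)‖ = ‖T k‖ := by
      rw [CStarRing.norm_self_mul_star, Real.sqrt_mul_self (norm_nonneg _)]
    rw [h2] at h1
    exact le_trans h1 (hb k)
  -- the key iterated estimate
  have key0 : ∀ n : ℕ, ‖(star S * S) ^ (n + 1)‖ ≤
      ‖S‖ * (F.card * (b * (a ^ n * b ^ n))) := by
    intro n
    have e1 : (star S * S) ^ (n + 1) = star S * (S * (star S * S) ^ n) := by
      rw [pow_succ', mul_assoc]
    have e2 : S * (star S * S) ^ n = ∑ k ∈ F, ∑ w ∈ chainset F n, T k * Dop T w := by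
      rw [hS, Finset.sum_mul]
      exact Finset.sum_congr rfl fun k _ => expand T F n k
    rw [e1, e2]
    have h1 : ‖star S * ∑ k ∈ F, ∑ w ∈ chainset F n, T k * Dop T w‖
        ≤ ‖S‖ * ∑ k ∈ F, ∑ w ∈ chainset F n, ‖T k * Dop T w‖ := by
      refine le_trans (norm_mul_le _ _) ?_
      rw [norm_star]
      exact mul_le_mul_of_nonneg_left
        (le_trans (norm_sum_le _ _) (Finset.sum_le_sum fun k _ => norm_sum_le _ _))
        (norm_nonneg _)
    refine le_trans h1 ?_
    refine mul_le_mul_of_nonneg_left ?_ (norm_nonneg _)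
    have h2 : ∀ k ∈ F, ∑ w ∈ chainset F n, ‖T k * Dop T w‖
        ≤ b * (a ^ n * b ^ n) := by
      intro k hk
      have h3 : ∑ w ∈ chainset F n, ‖T k * Dop T w‖
          ≤ ∑ w ∈ chainset F n, Real.sqrt ‖T k‖ * rho T k w :=
        Finset.sum_le_sum fun w _ => norm_cop_le T k w
      refine le_trans h3 ?_
      rw [← Finset.mul_sum]
      have h4 := sum_rho_le T F ha hb n k hk
      have h5 : Real.sqrt ‖T k‖ ≤ Real.sqrt b := Real.sqrt_le_sqrt (hTb k hk)
      calc Real.sqrt ‖T k‖ * ∑ w ∈ chainset F n, rho T k w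
          ≤ Real.sqrt b * (Real.sqrt b * (a ^ n * b ^ n)) := by
            apply mul_le_mul h5 h4 (Finset.sum_nonneg fun w _ => rho_nonneg T _ _)
              (Real.sqrt_nonneg _)
        _ = b * (a ^ n * b ^ n) := by
            rw [← mul_assoc, Real.mul_self_sqrt hb0]
    calc ∑ k ∈ F, ∑ w ∈ chainset F n, ‖T k * Dop T w‖
        ≤ ∑ _k ∈ F, b * (a ^ n * b ^ n) := Finset.sum_le_sum h2
      _ = F.card * (b * (a ^ n * b ^ n)) := by
          rw [Finset.sum_const, nsmul_eq_mul]
  -- convert to the power-2^m estimate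
  have key : ∀ m : ℕ, (‖S‖ ^ 2) ^ 2 ^ m ≤ (‖S‖ * F.card / a) * (a * b) ^ 2 ^ m := by
    intro m
    have hsa : IsSelfAdjoint (star S * S) := IsSelfAdjoint.star_mul_self S
    have hnorm : ‖(star S * S) ^ 2 ^ m‖ = ‖star S * S‖ ^ 2 ^ m := by
      rw [← coe_nnnorm, hsa.nnnorm_pow_two_pow, NNReal.coe_pow, coe_nnnorm]
    have h2m : 2 ^ m - 1 + 1 = 2 ^ m := Nat.succ_pred_eq_of_pos (Nat.two_pow_pos m)
    have hk := key0 (2 ^ m - 1)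
    rw [h2m, hnorm, CStarRing.norm_star_mul_self, ← sq] at hk
    refine le_trans hk (le_of_eq ?_)
    have e3 : (a * b) ^ 2 ^ m = (a * b) * (a ^ (2 ^ m - 1) * b ^ (2 ^ m - 1)) := by
      conv_lhs => rw [← h2m]
      rw [pow_succ', mul_pow]
    rw [e3]
    field_simp
  -- conclude ‖S‖² ≤ a b
  have hab : 0 < a * b := mul_pos ha' hb'
  set r := ‖S‖ ^ 2 / (a * b) with hr
  set C := ‖S‖ * F.card / a with hC
  have hrC : ∀ m : ℕ, r ^ 2 ^ m ≤ C := by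
    intro m
    rw [hr, div_pow, div_le_iff₀ (pow_pos hab _)]
    exact key m
  have hr1 : r ≤ 1 := by
    by_contra hcon
    push_neg at hcon
    obtain ⟨m, hm⟩ := ((tendsto_pow_atTop_atTop_of_one_lt hcon).eventually_gt_atTop C).exists
    have hmono : r ^ m ≤ r ^ 2 ^ m := pow_le_pow_right₀ hcon.le (Nat.lt_two_pow_self (n := m)).le
    exact absurd (le_trans hmono (hrC m)) (not_le.mpr hm)
  have hfin : ‖S‖ ^ 2 ≤ a * b := by
    rw [hr, div_le_one hab] at hr1
    exact hr1
  calc ‖S‖ = Real.sqrt (‖S‖ ^ 2) := (Real.sqrt_sq (norm_nonneg _)).symm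
    _ ≤ Real.sqrt (a * b) := Real.sqrt_le_sqrt hfin

end CotlarSteinAux

/-- **Tail criterion for norm convergence via Cotlar–Stein.**
Let `{T_j}_{j∈ℕ}` be bounded operators on a Hilbert space `H` with
`A := sup_j Σ_k ‖T_j* T_k‖^{1/2} < ∞` and `B := sup_k Σ_j ‖T_j T_k*‖^{1/2} < ∞`.  If moreover
the tails `A_N := sup_j Σ_{k≥N} ‖T_j* T_k‖^{1/2}` and `B_N := sup_k Σ_{j≥N} ‖T_j T_k*‖^{1/2}`
tend to `0` as `N → ∞`, then `Σ_j T_j` converges in operator norm and its sum `T` satisfies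
`‖T‖ ≤ √(AB)`. -/
theorem cotlar_stein_norm_convergence {H : Type*} [NormedAddCommGroup H]
    [InnerProductSpace ℂ H] [CompleteSpace H]
    (T : ℕ → H →L[ℂ] H) (A B : ℝ)
    (hA : ∀ j : ℕ, ∀ F : Finset ℕ,
      ∑ k ∈ F, Real.sqrt ‖(ContinuousLinearMap.adjoint (T j)).comp (T k)‖ ≤ A)
    (hB : ∀ k : ℕ, ∀ F : Finset ℕ,
      ∑ j ∈ F, Real.sqrt ‖(T j).comp (ContinuousLinearMap.adjoint (T k))‖ ≤ B)
    (hAtail : ∀ ε > 0, ∃ N : ℕ, ∀ j : ℕ, ∀ F : Finset ℕ, (∀ k ∈ F, N ≤ k) →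
      ∑ k ∈ F, Real.sqrt ‖(ContinuousLinearMap.adjoint (T j)).comp (T k)‖ ≤ ε)
    (hBtail : ∀ ε > 0, ∃ N : ℕ, ∀ k : ℕ, ∀ F : Finset ℕ, (∀ j ∈ F, N ≤ j) →
      ∑ j ∈ F, Real.sqrt ‖(T j).comp (ContinuousLinearMap.adjoint (T k))‖ ≤ ε) :
    ∃ S : H →L[ℂ] H, HasSum T S ∧ ‖S‖ ≤ Real.sqrt (A * B) := by
  have hcomp : ∀ X Y : H →L[ℂ] H, (ContinuousLinearMap.adjoint X).comp Y = star X * Y := by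
    intro X Y
    rw [ContinuousLinearMap.star_eq_adjoint, ContinuousLinearMap.mul_def]
  have hA' : ∀ j : ℕ, ∀ F : Finset ℕ, ∑ k ∈ F, Real.sqrt ‖star (T j) * T k‖ ≤ A := by
    intro j F
    simpa only [hcomp] using hA j F
  have hB' : ∀ k : ℕ, ∀ F : Finset ℕ, ∑ j ∈ F, Real.sqrt ‖T k * star (T j)‖ ≤ B := by
    intro k F
    have e : ∀ j, ‖T k * star (T j)‖ = ‖(T j).comp (ContinuousLinearMap.adjoint (T k))‖ := by
      intro j
      rw [← norm_star, star_mul, star_star, ContinuousLinearMap.star_eq_adjoint,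
        ContinuousLinearMap.mul_def]
    simp only [e]
    exact hB k F
  have hB0 : 0 ≤ B := le_trans (by simp) (hB' 0 ∅)
  have hAtail' : ∀ ε > 0, ∃ N : ℕ, ∀ j : ℕ, ∀ F : Finset ℕ, (∀ k ∈ F, N ≤ k) →
      ∑ k ∈ F, Real.sqrt ‖star (T j) * T k‖ ≤ ε := by
    intro ε hε
    obtain ⟨N, hN⟩ := hAtail ε hε
    exact ⟨N, fun j F hF => by simpa only [hcomp] using hN j F hF⟩
  have hsummable : Summable T := by
    rw [summable_iff_vanishing_norm]
    intro ε hε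
    set δ := ε ^ 2 / (B + 1) with hδ
    have hδ0 : 0 < δ := by positivity
    obtain ⟨N, hN⟩ := hAtail' δ hδ0
    refine ⟨Finset.range N, fun t ht => ?_⟩
    have h1 : ∀ j, ∑ k ∈ t, Real.sqrt ‖star (T j) * T k‖ ≤ δ := by
      intro j
      refine hN j t fun k hk => ?_
      by_contra hlt
      push_neg at hlt
      exact Finset.disjoint_left.mp ht hk (Finset.mem_range.mpr hlt)
    have h2 := CotlarSteinAux.norm_finset_sum_le T t h1 (fun k => hB' k t)
    refine lt_of_le_of_lt h2 ?_
    have h3 : δ * B < ε ^ 2 := by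
      have hlt1 : B / (B + 1) < 1 := (div_lt_one (by positivity)).mpr (by linarith)
      calc δ * B = ε ^ 2 * (B / (B + 1)) := by rw [hδ]; ring
        _ < ε ^ 2 * 1 := by
            exact mul_lt_mul_of_pos_left hlt1 (by positivity)
        _ = ε ^ 2 := mul_one _
    calc Real.sqrt (δ * B) < Real.sqrt (ε ^ 2) :=
          Real.sqrt_lt_sqrt (by positivity) h3
      _ = ε := Real.sqrt_sq hε.le
  obtain ⟨S, hS⟩ := hsummable
  refine ⟨S, hS, ?_⟩
  have hbound : ∀ F : Finset ℕ, ‖∑ j ∈ F, T j‖ ≤ Real.sqrt (A * B) := fun F =>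
    CotlarSteinAux.norm_finset_sum_le T F (fun j => hA' j F) (fun k => hB' k F)
  have hS' : Filter.Tendsto (fun s : Finset ℕ => ∑ b ∈ s, T b) Filter.atTop (nhds S) := hS
  exact le_of_tendsto hS'.norm (Filter.Eventually.of_forall hbound)
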